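/- Consider a star metric with n leaves at distance 1 from the center, one server per leaf, and a deterministic online matching algorithm that may query a prediction oracle at most B times. There exists an adversarial request sequence and accurate predictions such that the algorithm's cost is at least 2n − B − 1, while the optimal offline perfect matching has cost at most B + 1; hence the competitive ratio is at least 2n/(B+1) − 1. -/

import Mathlib

/-- Points of the star metric with `n` leaves: `none` is the center, `some i`
is the `i`-th leaf; leaf–center distance 1, leaf–leaf distance 2. -/
noncomputable def starDist {n : ℕ} (x y : Option (Fin n)) : ℝ :=
  if x = y then 0 else if x = none ∨ y = none then 1 else 2

/-- The list of requests revealed up to and including round `t` (0-indexed). -/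
def reqsUpTo {n : ℕ} (r : Fin n → Option (Fin n)) (t : ℕ) : List (Option (Fin n)) :=
  (List.ofFn r).take (t + 1)

/-- The list of predictions received up to and including round `t`, where
`q` decides, from the requests seen so far, whether to query the oracle,
and `P t'` is the prediction returned in round `t'`. -/
def predsUpTo {n : ℕ} (q : List (Option (Fin n)) → Bool) (r : Fin n → Option (Fin n))
    (P : ℕ → Finset (Fin n)) (t : ℕ) : List (Finset (Fin n)) :=
  ((List.range (t + 1)).filter fun t' => q (reqsUpTo r t')).map P

/-- The accurate prediction after round `t`: the set of servers matched to the
requests of rounds `0, …, t` in the fixed offline matching `π`. -/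
def accPred {n : ℕ} (π : Fin n ≃ Fin n) (t : ℕ) : Finset (Fin n) :=
  Finset.image π (Finset.univ.filter fun i : Fin n => i.val ≤ t)

namespace S8
variable {n : ℕ}

/-- pick a value outside `s`, if possible -/
noncomputable def pick (s : Finset (Fin n)) : Option (Fin n) :=
  if h : sᶜ.Nonempty then some (sᶜ.min' h) else none

lemma pick_not_mem {s : Finset (Fin n)} {v : Fin n} (h : pick s = some v) : v ∉ s := by
  unfold pick at h
  by_cases h' : sᶜ.Nonempty
  · rw [dif_pos h'] at h
    have hm := Finset.min'_mem _ h'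
    have hv : v ∈ sᶜ := by rw [← Option.some_inj.mp h]; exact hm
    exact Finset.mem_compl.mp hv
  · rw [dif_neg h'] at h
    exact absurd h (by simp)

lemma pick_isSome {s : Finset (Fin n)} (h : s.card < n) : ∃ v, pick s = some v := by
  have : sᶜ.Nonempty := by
    rw [← Finset.card_pos, Finset.card_compl]
    simp [Fintype.card_fin]; omega
  exact ⟨sᶜ.min' this, by simp [pick, this]⟩

/-- committed values of a partial assignment -/
def pv (piv : List (Option (Fin n))) : Finset (Fin n) := (piv.filterMap id).toFinset

lemma mem_pv {piv : List (Option (Fin n))} {v : Fin n} : v ∈ pv piv ↔ some v ∈ piv := by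
  simp [pv, List.mem_filterMap]

noncomputable def fillAux : List (Option (Fin n)) → Finset (Fin n) → List (Option (Fin n))
  | [], _ => []
  | some v :: l, u => some v :: fillAux l u
  | none :: l, u =>
      match h : pick u with
      | some v => some v :: fillAux l (insert v u)
      | none => none :: fillAux l u

@[simp] lemma fillAux_length (l : List (Option (Fin n))) (u : Finset (Fin n)) :
    (fillAux l u).length = l.length := by
  induction l generalizing u with
  | nil => rfl
  | cons a l ih =>
    cases a with
    | some v => simp [fillAux, ih]
    | none =>
      rw [fillAux]
      rcases h : pick u with _ | v <;> simp [h, ih]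

lemma fillAux_getD_some {l : List (Option (Fin n))} {u : Finset (Fin n)} {i : ℕ} {v : Fin n}
    (h : l.getD i none = some v) : (fillAux l u).getD i none = some v := by
  induction l generalizing u i with
  | nil => simp at h
  | cons a l ih =>
    cases a with
    | some w =>
      cases i with
      | zero => simpa [fillAux] using h
      | succ i => simp only [fillAux, List.getD_cons_succ] at h ⊢; exact ih h
    | none =>
      cases i with
      | zero => simp at h
      | succ i =>
        simp only [List.getD_cons_succ] at h
        rw [fillAux]
        rcases hp : pick u with _ | w
        · simpa using ih h
        · simpa using ih h

lemma fillAux_complete {l : List (Option (Fin n))} {u : Finset (Fin n)}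
    (h : u.card + l.count none ≤ n) : none ∉ fillAux l u := by
  induction l generalizing u with
  | nil => simp [fillAux]
  | cons a l ih =>
    cases a with
    | some w =>
      have : l.count none = (some w :: l).count none := by simp [List.count_cons]
      simp only [fillAux, List.mem_cons]
      push_neg
      exact ⟨by simp, ih (by omega)⟩
    | none =>
      have hc : (none :: l).count none = l.count none + 1 := by simp [List.count_cons]
      rw [hc] at h
      have hcard : u.card < n := by omega
      obtain ⟨v, hv⟩ := pick_isSome hcard
      rw [fillAux]
      have hins : (insert v u).card ≤ u.card + 1 := Finset.card_insert_le _ _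
      rcases hp : pick u with _ | w
      · rw [hp] at hv; simp at hv
      · simp only [List.mem_cons]
        push_neg
        refine ⟨by simp, ih ?_⟩
        rw [hp] at hv
        have : (insert w u).card ≤ u.card + 1 := Finset.card_insert_le _ _
        omega

lemma fillAux_nodup {l : List (Option (Fin n))} {u : Finset (Fin n)}
    (hsub : ∀ v : Fin n, some v ∈ l → v ∈ u) (hnd : (l.filterMap id).Nodup) :
    ((fillAux l u).filterMap id).Nodup ∧
      ∀ w : Fin n, some w ∈ fillAux l u → (some w ∈ l ∨ w ∉ u) := by
  induction l generalizing u with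
  | nil => simp [fillAux]
  | cons a l ih =>
    cases a with
    | some v =>
      rw [show ((some v :: l).filterMap id) = v :: l.filterMap id by simp, List.nodup_cons] at hnd
      obtain ⟨hv, hnd⟩ := hnd
      have hsub' : ∀ w : Fin n, some w ∈ l → w ∈ u := fun w hw => hsub w (by simp [hw])
      obtain ⟨ih1, ih2⟩ := ih hsub' hnd
      constructor
      · rw [show fillAux (some v :: l) u = some v :: fillAux l u from rfl,
          show ((some v :: fillAux l u).filterMap id) = v :: (fillAux l u).filterMap id by simp,
          List.nodup_cons]
        refine ⟨?_, ih1⟩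
        intro hvmem
        rw [List.mem_filterMap] at hvmem
        obtain ⟨a, ha, ha2⟩ := hvmem
        simp only [id] at ha2; subst ha2
        rcases ih2 v ha with h | h
        · exact hv (by simpa using h)
        · exact h (hsub v (by simp))
      · intro w hw
        simp only [fillAux, List.mem_cons] at hw
        rcases hw with hw | hw
        · left; simp at hw; simp [hw]
        · rcases ih2 w hw with h | h
          · left; simp [h]
          · right; exact h
    | none =>
      have hsub' : ∀ w : Fin n, some w ∈ l → w ∈ u := fun w hw => hsub w (by simp [hw])
      rw [show ((none :: l).filterMap id) = l.filterMap id by simp] at hnd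
      rw [fillAux]
      rcases hp : pick u with _ | v
      · obtain ⟨ih1, ih2⟩ := ih hsub' hnd
        constructor
        · simpa using ih1
        · intro w hw
          simp only [List.mem_cons] at hw
          rcases hw with hw | hw
          · left; rw [hw]; exact List.mem_cons_self
          · rcases ih2 w hw with h | h
            · left; exact List.mem_cons_of_mem _ h
            · right; exact h
      · have hvu : v ∉ u := pick_not_mem hp
        have hsub2 : ∀ w : Fin n, some w ∈ l → w ∈ insert v u := fun w hw =>
          Finset.mem_insert_of_mem (hsub' w hw)
        obtain ⟨ih1, ih2⟩ := ih hsub2 hnd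
        constructor
        · rw [show ((some v :: fillAux l (insert v u)).filterMap id)
              = v :: (fillAux l (insert v u)).filterMap id by simp, List.nodup_cons]
          refine ⟨?_, ih1⟩
          intro hvmem
          rw [List.mem_filterMap] at hvmem
          obtain ⟨a, ha, ha2⟩ := hvmem
          simp only [id] at ha2; subst ha2
          rcases ih2 v ha with h | h
          · exact hvu (hsub' v h)
          · exact h (Finset.mem_insert_self _ _)
        · intro w hw
          simp only [List.mem_cons] at hw
          rcases hw with hw | hw
          · right; simp at hw; subst hw; exact hvu
          · rcases ih2 w hw with h | h
            · left; simp [h]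
            · right; intro hwu; exact h (Finset.mem_insert_of_mem hwu)


lemma length_filterMap_id (l : List (Option (Fin n))) :
    (l.filterMap id).length + l.count none = l.length := by
  induction l with
  | nil => simp
  | cons a l ih =>
    cases a with
    | none =>
      have ih' : (l.filterMap fun x => x).length + l.count none = l.length := ih
      simp [List.count_cons]; omega
    | some v =>
      have ih' : (l.filterMap fun x => x).length + l.count none = l.length := ih
      simp [List.count_cons]; omega

variable (B : ℕ) (q : List (Option (Fin n)) → Bool)
variable (act : List (Option (Fin n)) → List (Finset (Fin n)) → Fin n)

def predAt (piv : List (Option (Fin n))) (i : ℕ) : Finset (Fin n) :=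
  ((List.range (i+1)).filterMap fun j => piv.getD j none).toFinset

def predsAt (piv reqs : List (Option (Fin n))) (t : ℕ) : List (Finset (Fin n)) :=
  ((List.range (t+1)).filter fun i => q (reqs.take (i+1))).map (predAt piv)

def algAt (piv reqs : List (Option (Fin n))) (t : ℕ) : Fin n :=
  act (reqs.take (t+1)) (predsAt q piv reqs t)

def Aset (piv reqs : List (Option (Fin n))) : Finset (Fin n) :=
  (Finset.range reqs.length).image fun t' => algAt q act piv reqs t'

noncomputable def step (st : List (Option (Fin n)) × List (Option (Fin n))) :
    List (Option (Fin n)) × List (Option (Fin n)) :=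
  let cand := Aset q act st.2 st.1 \ pv st.2
  let p :=
    if h : cand.Nonempty then (st.1 ++ [some (cand.min' h)], st.2 ++ [some (cand.min' h)])
    else if st.1.count none < B + 1 then (st.1 ++ [none], st.2 ++ [none])
    else
      match pick (pv st.2) with
      | some v => (st.1 ++ [some v], st.2 ++ [some v])
      | none => (st.1 ++ [none], st.2 ++ [none])
  if q p.1 then (p.1, fillAux p.2 (pv p.2)) else p

noncomputable def sim : ℕ → List (Option (Fin n)) × List (Option (Fin n))
  | 0 => ([], [])
  | t+1 => step B q act (sim t)

lemma step_spec (st : List (Option (Fin n)) × List (Option (Fin n))) :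
    ∃ x : Option (Fin n),
      (step B q act st).1 = st.1 ++ [x] ∧
      ((step B q act st).2 =
        if q (st.1 ++ [x]) then fillAux (st.2 ++ [x]) (pv (st.2 ++ [x])) else st.2 ++ [x]) ∧
      ((∃ h : (Aset q act st.2 st.1 \ pv st.2).Nonempty,
          x = some ((Aset q act st.2 st.1 \ pv st.2).min' h))
        ∨ ((Aset q act st.2 st.1 \ pv st.2) = ∅ ∧ st.1.count none < B + 1 ∧ x = none)
        ∨ ((Aset q act st.2 st.1 \ pv st.2) = ∅ ∧ ¬ st.1.count none < B + 1 ∧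
            ((∃ v, pick (pv st.2) = some v ∧ x = some v)
              ∨ (pick (pv st.2) = none ∧ x = none)))) := by
  unfold step
  set cand := Aset q act st.2 st.1 \ pv st.2 with hcand
  by_cases h : cand.Nonempty
  · refine ⟨some (cand.min' h), ?_⟩
    simp only [dif_pos h]
    by_cases hq : q (st.1 ++ [some (cand.min' h)]) <;>
      simp [hq, h]
  · simp only [dif_neg h]
    have hce : cand = ∅ := Finset.not_nonempty_iff_eq_empty.mp h
    by_cases hc : st.1.count none < B + 1
    · refine ⟨none, ?_⟩
      simp only [if_pos hc]
      by_cases hq : q (st.1 ++ [none]) <;> simp [hq, hce, hc]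
    · simp only [if_neg hc]
      rcases hp : pick (pv st.2) with _ | v
      · refine ⟨none, ?_⟩
        by_cases hq : q (st.1 ++ [none]) <;> simp [hq, hce, hc, hp]
      · refine ⟨some v, ?_⟩
        by_cases hq : q (st.1 ++ [some v]) <;> simp [hq, hce, hc, hp]

lemma step_x_not_mem {st : List (Option (Fin n)) × List (Option (Fin n))}
    {x : Option (Fin n)} {v : Fin n}
    (hx : (∃ h : (Aset q act st.2 st.1 \ pv st.2).Nonempty,
          x = some ((Aset q act st.2 st.1 \ pv st.2).min' h))
        ∨ ((Aset q act st.2 st.1 \ pv st.2) = ∅ ∧ st.1.count none < B + 1 ∧ x = none)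
        ∨ ((Aset q act st.2 st.1 \ pv st.2) = ∅ ∧ ¬ st.1.count none < B + 1 ∧
            ((∃ v, pick (pv st.2) = some v ∧ x = some v)
              ∨ (pick (pv st.2) = none ∧ x = none))))
    (hv : x = some v) : v ∉ pv st.2 := by
  rcases hx with ⟨h, hx⟩ | ⟨_, _, hx⟩ | ⟨_, _, ⟨w, hw, hx⟩ | ⟨_, hx⟩⟩
  · have he : (Aset q act st.2 st.1 \ pv st.2).min' h = v :=
      Option.some_inj.mp (hx.symm.trans hv)
    rw [← he]
    exact (Finset.mem_sdiff.mp (Finset.min'_mem _ h)).2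
  · simp [hx] at hv
  · have he : w = v := Option.some_inj.mp (hx.symm.trans hv)
    rw [← he]
    exact pick_not_mem hw
  · simp [hx] at hv

lemma sim_len (t : ℕ) : (sim B q act t).1.length = t ∧ (sim B q act t).2.length = t := by
  induction t with
  | zero => simp [sim]
  | succ t ih =>
    obtain ⟨x, h1, h2, _⟩ := step_spec B q act (sim B q act t)
    constructor
    · show (step B q act (sim B q act t)).1.length = t + 1
      rw [h1]; simp [ih.1]
    · show (step B q act (sim B q act t)).2.length = t + 1
      rw [h2]
      split <;> simp [ih.2]

lemma sim_piv_mono {t t' i : ℕ} {v : Fin n} (htt : t ≤ t')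
    (h : (sim B q act t).2.getD i none = some v) :
    (sim B q act t').2.getD i none = some v := by
  induction t' with
  | zero =>
    have ht0 : t = 0 := Nat.le_zero.mp htt
    subst ht0; exact h
  | succ t' ih =>
    rcases Nat.lt_or_ge t (t' + 1) with hlt | hge
    · have hmid : (sim B q act t').2.getD i none = some v := ih (by omega)
      obtain ⟨x, h1, h2, _⟩ := step_spec B q act (sim B q act t')
      show (step B q act (sim B q act t')).2.getD i none = some v
      rw [h2]
      have hap : ((sim B q act t').2 ++ [x]).getD i none = some v := by
        rcases Nat.lt_or_ge i (sim B q act t').2.length with hi | hi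
        · rw [List.getD_append _ _ _ _ hi]; exact hmid
        · exfalso
          rw [List.getD_eq_default] at hmid
          · simp at hmid
          · exact hi
      split
      · exact fillAux_getD_some hap
      · exact hap
    · have : t = t' + 1 := by omega
      rw [← this]; exact h

lemma sim_nodup (t : ℕ) : ((sim B q act t).2.filterMap id).Nodup := by
  induction t with
  | zero => simp [sim]
  | succ t ih =>
    obtain ⟨x, h1, h2, hx⟩ := step_spec B q act (sim B q act t)
    show ((step B q act (sim B q act t)).2.filterMap id).Nodup
    rw [h2]
    have hnd : (((sim B q act t).2 ++ [x]).filterMap id).Nodup := by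
      rw [List.filterMap_append]
      cases x with
      | none => simpa using ih
      | some v =>
        have hv : v ∉ pv (sim B q act t).2 := step_x_not_mem B q act hx rfl
        rw [mem_pv] at hv
        have h1 : ([some v] : List (Option (Fin n))).filterMap id = [v] := by simp
        rw [h1, List.nodup_append]
        refine ⟨ih, by simp, ?_⟩
        intro a ha b hb hab
        simp only [List.mem_singleton] at hb
        subst hb; subst hab
        rw [List.mem_filterMap] at ha
        obtain ⟨b, hb1, hb2⟩ := ha
        simp only [id] at hb2
        subst hb2
        exact hv hb1
    split
    · exact (fillAux_nodup (fun w hw => mem_pv.mpr hw) hnd).1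
    · exact hnd


lemma pv_card_le (l : List (Option (Fin n))) : (pv l).card ≤ (l.filterMap id).length :=
  List.toFinset_card_le _

lemma sim_take {t t' : ℕ} (h : t ≤ t') :
    (sim B q act t').1.take t = (sim B q act t).1 := by
  induction t' with
  | zero =>
    have : t = 0 := Nat.le_zero.mp h
    subst this; simp [sim]
  | succ t' ih =>
    rcases Nat.lt_or_ge t (t' + 1) with hlt | hge
    · obtain ⟨x, h1, _, _⟩ := step_spec B q act (sim B q act t')
      show (step B q act (sim B q act t')).1.take t = _
      rw [h1, List.take_append]
      have hl : (sim B q act t').1.length = t' := (sim_len B q act t').1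
      have h0 : t - (sim B q act t').1.length = 0 := by omega
      rw [h0]
      simp [ih (by omega)]
    · have : t = t' + 1 := by omega
      subst this
      have hl : (sim B q act (t' + 1)).1.length = t' + 1 := (sim_len B q act _).1
      exact List.take_of_length_le (by rw [hl])

lemma sim_count {t : ℕ} (ht : t ≤ n) : (sim B q act t).1.count none ≤ B + 1 := by
  induction t with
  | zero => simp [sim]
  | succ t ih =>
    obtain ⟨x, h1, _, hx⟩ := step_spec B q act (sim B q act t)
    show (step B q act (sim B q act t)).1.count none ≤ B + 1
    rw [h1, List.count_append]
    rcases hx with ⟨h, hxe⟩ | ⟨_, hc, hxe⟩ | ⟨_, hc, ⟨v, hp, hxe⟩ | ⟨hp, hxe⟩⟩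
    · subst hxe; simpa using ih (by omega)
    · subst hxe; simp; omega
    · subst hxe; simpa using ih (by omega)
    · exfalso
      have hcard : (pv (sim B q act t).2).card < n := by
        have := pv_card_le (sim B q act t).2
        have h2 := List.length_filterMap_le (id : Option (Fin n) → Option (Fin n)) (sim B q act t).2
        have h3 : (sim B q act t).2.length = t := (sim_len B q act t).2
        omega
      obtain ⟨v, hv⟩ := pick_isSome hcard
      rw [hp] at hv; simp at hv

lemma sim_query_fill {t : ℕ} (ht : t < n) (hq : q ((sim B q act (t+1)).1) = true) :
    ∀ j < t + 1, ∃ v, (sim B q act (t+1)).2.getD j none = some v := by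
  obtain ⟨x, h1, h2, _⟩ := step_spec B q act (sim B q act t)
  have hq' : q ((sim B q act t).1 ++ [x]) = true := by
    have hq0 : q ((step B q act (sim B q act t)).1) = true := hq
    rw [h1] at hq0; exact hq0
  have h2' : (sim B q act (t+1)).2
      = fillAux ((sim B q act t).2 ++ [x]) (pv ((sim B q act t).2 ++ [x])) := by
    show (step B q act (sim B q act t)).2 = _
    rw [h2, if_pos hq']
  set piv' := (sim B q act t).2 ++ [x] with hpiv'
  have hlen : piv'.length = t + 1 := by
    simp [hpiv', (sim_len B q act t).2]
  have hcomp : none ∉ fillAux piv' (pv piv') := by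
    apply fillAux_complete
    have hc1 := pv_card_le piv'
    have hc2 := length_filterMap_id piv'
    omega
  intro j hj
  have hjlen : j < (fillAux piv' (pv piv')).length := by
    rw [fillAux_length, hlen]; exact hj
  rw [h2', List.getD_eq_getElem _ _ hjlen]
  rcases he : (fillAux piv' (pv piv'))[j] with _ | v
  · exact absurd (he ▸ List.getElem_mem hjlen) hcomp
  · exact ⟨v, rfl⟩

lemma predAt_congr {p1 p2 : List (Option (Fin n))} {i : ℕ}
    (h : ∀ j ≤ i, p1.getD j none = p2.getD j none) : predAt p1 i = predAt p2 i := by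
  unfold predAt
  congr 1
  apply List.filterMap_congr
  intro a ha
  rw [List.mem_range] at ha
  exact h a (by omega)

lemma sim_predAt_stable {i t : ℕ} (hi : i < n) (hit : i < t)
    (hq : q ((sim B q act (i+1)).1) = true) :
    predAt (sim B q act t).2 i = predAt (sim B q act (i+1)).2 i := by
  apply predAt_congr
  intro j hj
  obtain ⟨v, hv⟩ := sim_query_fill B q act hi hq j (by omega)
  rw [hv, sim_piv_mono B q act (by omega : i + 1 ≤ t) hv]

lemma sim_algAt_stable {t' t1 t2 : ℕ} (h1 : t' < t1) (h2 : t' < t2) (hn : t' < n) :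
    algAt q act (sim B q act t1).2 (sim B q act t1).1 t'
      = algAt q act (sim B q act t2).2 (sim B q act t2).1 t' := by
  unfold algAt
  have hr : (sim B q act t1).1.take (t' + 1) = (sim B q act t2).1.take (t' + 1) := by
    rw [sim_take B q act (by omega : t' + 1 ≤ t1), sim_take B q act (by omega : t' + 1 ≤ t2)]
  rw [hr]
  congr 1
  unfold predsAt
  have hfil : ∀ tt, t' < tt →
      ((List.range (t'+1)).filter fun i => q ((sim B q act tt).1.take (i+1)))
        = (List.range (t'+1)).filter fun i => q ((sim B q act (i+1)).1) := by
    intro tt htt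
    apply List.filter_congr
    intro i hi
    rw [List.mem_range] at hi
    rw [sim_take B q act (by omega : i + 1 ≤ tt)]
  rw [hfil t1 h1, hfil t2 h2]
  apply List.map_congr_left
  intro i hi
  rw [List.mem_filter, List.mem_range] at hi
  obtain ⟨hi1, hi2⟩ := hi
  rw [sim_predAt_stable B q act (t := t1) (by omega) (by omega) hi2]
  rw [sim_predAt_stable B q act (t := t2) (by omega) (by omega) hi2]


/-! ### Final objects -/

noncomputable def RQ : List (Option (Fin n)) := (sim B q act n).1
noncomputable def PV : List (Option (Fin n)) := (sim B q act n).2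
noncomputable def pivF : List (Option (Fin n)) := fillAux (PV B q act) (pv (PV B q act))
noncomputable def rfin : Fin n → Option (Fin n) := fun i => (RQ B q act).getD i.val none
noncomputable def pifin : Fin n → Fin n := fun i => ((pivF B q act).getD i.val none).getD i

lemma RQ_len : (RQ B q act).length = n := (sim_len B q act n).1
lemma PV_len : (PV B q act).length = n := (sim_len B q act n).2
lemma pivF_len : (pivF B q act).length = n := by
  rw [pivF, fillAux_length]; exact PV_len B q act

lemma pivF_complete : none ∉ pivF B q act := by
  apply fillAux_complete
  have hc1 := pv_card_le (PV B q act)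
  have hc2 := length_filterMap_id (PV B q act)
  have hc3 := PV_len B q act
  omega

lemma pivF_getD {i : ℕ} (hi : i < n) : ∃ v, (pivF B q act).getD i none = some v := by
  have hlen : i < (pivF B q act).length := by rw [pivF_len]; exact hi
  rw [List.getD_eq_getElem _ _ hlen]
  rcases he : (pivF B q act)[i] with _ | v
  · exact absurd (he ▸ List.getElem_mem hlen) (pivF_complete B q act)
  · exact ⟨v, rfl⟩

lemma pivF_ext {i : ℕ} {v : Fin n} (h : (PV B q act).getD i none = some v) :
    (pivF B q act).getD i none = some v := fillAux_getD_some h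

lemma pivF_nodup : ((pivF B q act).filterMap id).Nodup :=
  (fillAux_nodup (fun w hw => mem_pv.mpr hw) (sim_nodup B q act n)).1

lemma getD_mem_filterMap {l : List (Option (Fin n))} {j : ℕ} {v : Fin n}
    (h : l.getD j none = some v) : v ∈ l.filterMap id := by
  rcases Nat.lt_or_ge j l.length with hj | hj
  · rw [List.getD_eq_getElem _ _ hj] at h
    exact List.mem_filterMap.mpr ⟨some v, h ▸ List.getElem_mem hj, rfl⟩
  · rw [List.getD_eq_default _ _ hj] at h; simp at h

lemma nodup_getD_inj {l : List (Option (Fin n))} (hnd : (l.filterMap id).Nodup)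
    {i j : ℕ} {v : Fin n} (hi : l.getD i none = some v) (hj : l.getD j none = some v) :
    i = j := by
  induction l generalizing i j with
  | nil => simp at hi
  | cons a l ih =>
    cases a with
    | some w =>
      have hnd' : (w :: l.filterMap id).Nodup := by simpa using hnd
      rw [List.nodup_cons] at hnd'
      cases i with
      | zero =>
        cases j with
        | zero => rfl
        | succ j =>
          exfalso
          simp only [List.getD_cons_zero] at hi
          simp only [List.getD_cons_succ] at hj
          have hw : w = v := by simpa using hi
          subst hw
          exact hnd'.1 (getD_mem_filterMap hj)
      | succ i =>
        cases j with
        | zero =>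
          exfalso
          simp only [List.getD_cons_zero] at hj
          simp only [List.getD_cons_succ] at hi
          have hw : w = v := by simpa using hj
          subst hw
          exact hnd'.1 (getD_mem_filterMap hi)
        | succ j =>
          simp only [List.getD_cons_succ] at hi hj
          exact congrArg Nat.succ (ih hnd'.2 hi hj)
    | none =>
      have hnd' : (l.filterMap id).Nodup := by simpa using hnd
      cases i with
      | zero => simp at hi
      | succ i =>
        cases j with
        | zero => simp at hj
        | succ j =>
          simp only [List.getD_cons_succ] at hi hj
          exact congrArg Nat.succ (ih hnd' hi hj)

lemma pifin_inj : Function.Injective (pifin B q act) := by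
  intro i j hij
  obtain ⟨vi, hvi⟩ := pivF_getD B q act i.isLt
  obtain ⟨vj, hvj⟩ := pivF_getD B q act j.isLt
  have hpi : pifin B q act i = vi := by rw [pifin, hvi]; rfl
  have hpj : pifin B q act j = vj := by rw [pifin, hvj]; rfl
  rw [hpi, hpj] at hij
  subst hij
  exact Fin.val_injective (nodup_getD_inj (pivF_nodup B q act) hvi hvj)

noncomputable def pe : Fin n ≃ Fin n :=
  Equiv.ofBijective _ (Finite.injective_iff_bijective.mp (pifin_inj B q act))

lemma pe_apply (i : Fin n) : pe B q act i = pifin B q act i := rfl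

/-- request–offline link: a leaf request is matched by the offline matching -/
lemma sim_reqpiv {t i : ℕ} {s : Fin n}
    (h : (sim B q act t).1.getD i none = some s) :
    (sim B q act t).2.getD i none = some s := by
  induction t generalizing i with
  | zero => simp [sim] at h
  | succ t ih =>
    obtain ⟨x, h1, h2, _⟩ := step_spec B q act (sim B q act t)
    have h1' : (sim B q act (t+1)).1 = (sim B q act t).1 ++ [x] := h1
    have hlen : (sim B q act t).1.length = t := (sim_len B q act t).1
    have hlen2 : (sim B q act t).2.length = t := (sim_len B q act t).2
    rw [h1'] at h
    have hap : ((sim B q act t).2 ++ [x]).getD i none = some s := by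
      rcases Nat.lt_or_ge i t with hi | hi
      · rw [List.getD_append _ _ _ _ (by omega)] at h
        rw [List.getD_append _ _ _ _ (by omega)]
        exact ih h
      · rcases Nat.lt_or_ge i (t + 1) with hi2 | hi2
        · have hit : i = t := by omega
          subst hit
          rw [List.getD_append_right _ _ _ _ (by omega)] at h
          rw [List.getD_append_right _ _ _ _ (by omega), hlen2]
          rw [hlen] at h
          simpa using h
        · exfalso
          rw [List.getD_eq_default] at h
          · simp at h
          · simp [hlen]; omega
    show (step B q act (sim B q act t)).2.getD i none = some s
    rw [h2]
    split
    · exact fillAux_getD_some hap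
    · exact hap


lemma accPred_eq {i : ℕ} (hi : i < n) :
    accPred (pe B q act) i = predAt (pivF B q act) i := by
  ext v
  rw [accPred, Finset.mem_image]
  unfold predAt
  rw [List.mem_toFinset, List.mem_filterMap]
  constructor
  · rintro ⟨j, hj, hjv⟩
    rw [Finset.mem_filter] at hj
    obtain ⟨w, hw⟩ := pivF_getD B q act j.isLt
    have : pe B q act j = w := by rw [pe_apply, pifin, hw]; rfl
    rw [hjv] at this  -- v = w? hjv : pe j = v
    refine ⟨j.val, ?_, ?_⟩
    · rw [List.mem_range]; omega
    · rw [hw, ← this]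
  · rintro ⟨j, hj, hjv⟩
    rw [List.mem_range] at hj
    refine ⟨⟨j, by omega⟩, ?_, ?_⟩
    · rw [Finset.mem_filter]; exact ⟨Finset.mem_univ _, by simp; omega⟩
    · rw [pe_apply, pifin]
      simp only
      rw [hjv]; rfl

lemma reqs_ofFn : List.ofFn (rfin B q act) = RQ B q act := by
  apply List.ext_getElem
  · rw [List.length_ofFn, RQ_len]
  · intro k h1 h2
    rw [List.getElem_ofFn]
    show rfin B q act _ = _
    rw [rfin]
    exact List.getD_eq_getElem _ _ h2

lemma reqsUpTo_eq (t : ℕ) : reqsUpTo (rfin B q act) t = (RQ B q act).take (t + 1) := by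
  rw [reqsUpTo, reqs_ofFn]

lemma preds_eq {t : ℕ} (ht : t < n) :
    predsUpTo q (rfin B q act) (accPred (pe B q act)) t = predsAt q (pivF B q act) (RQ B q act) t := by
  rw [predsUpTo, predsAt]
  have hfil : ((List.range (t+1)).filter fun i => q (reqsUpTo (rfin B q act) i))
      = (List.range (t+1)).filter fun i => q ((RQ B q act).take (i+1)) := by
    apply List.filter_congr
    intro i _
    rw [reqsUpTo_eq]
  rw [hfil]
  apply List.map_congr_left
  intro i hi
  rw [List.mem_filter, List.mem_range] at hi
  exact accPred_eq B q act (by omega)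

lemma predAt_pivF_eq {i : ℕ} (hi : i < n) (hq : q ((RQ B q act).take (i+1)) = true) :
    predAt (pivF B q act) i = predAt (PV B q act) i := by
  apply predAt_congr
  intro j hj
  have htake : (RQ B q act).take (i+1) = (sim B q act (i+1)).1 :=
    sim_take B q act (by omega)
  rw [htake] at hq
  obtain ⟨v, hv⟩ := sim_query_fill B q act hi hq j (by omega)
  have hPV : (PV B q act).getD j none = some v :=
    sim_piv_mono B q act (by omega : i + 1 ≤ n) hv
  rw [hPV, pivF_ext B q act hPV]

noncomputable def aN (t : ℕ) : Fin n := algAt q act (PV B q act) (RQ B q act) t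

lemma act_eq (t : Fin n) :
    act (reqsUpTo (rfin B q act) t.val) (predsUpTo q (rfin B q act) (accPred (pe B q act)) t.val)
      = aN B q act t.val := by
  rw [aN, algAt, reqsUpTo_eq, preds_eq B q act t.isLt]
  congr 1
  rw [predsAt, predsAt]
  apply List.map_congr_left
  intro i hi
  rw [List.mem_filter, List.mem_range] at hi
  exact predAt_pivF_eq B q act (by omega) hi.2

lemma Aset_eq {t : ℕ} (ht : t ≤ n) :
    Aset q act (sim B q act t).2 (sim B q act t).1
      = (Finset.range t).image fun t' => aN B q act t' := by
  rw [Aset, (sim_len B q act t).1]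
  apply Finset.image_congr
  intro x hx
  rw [Finset.coe_range, Set.mem_Iio] at hx
  rcases Nat.lt_or_ge t n with h | h
  · exact sim_algAt_stable B q act (by omega) (by omega) (by omega)
  · have : t = n := by omega
    subst this
    rfl


/-! ### Counting -/

lemma count_getD (l : List (Option (Fin n))) :
    l.count none = ∑ i ∈ Finset.range l.length, if l.getD i none = none then 1 else 0 := by
  induction l with
  | nil => simp
  | cons a l ih =>
    rw [List.length_cons, Finset.sum_range_succ']
    simp only [List.getD_cons_succ, List.getD_cons_zero]
    rw [List.count_cons, ← ih]
    cases a <;> simp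

lemma lenfilter (p : ℕ → Bool) (m : ℕ) :
    ((List.range m).filter p).length = ∑ i ∈ Finset.range m, if p i = true then 1 else 0 := by
  induction m with
  | zero => simp
  | succ m ih =>
    rw [List.range_succ, List.filter_append, List.length_append, Finset.sum_range_succ, ih]
    congr 1
    by_cases h : p m = true <;> simp [h]

noncomputable def Qc (t : ℕ) : ℕ :=
  ((List.range t).filter fun i => q ((RQ B q act).take (i+1))).length

lemma Qc_succ (t : ℕ) :
    Qc B q act (t+1) = Qc B q act t + (if q ((RQ B q act).take (t+1)) then 1 else 0) := by
  rw [Qc, Qc, List.range_succ, List.filter_append, List.length_append]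
  congr 1
  by_cases h : q ((RQ B q act).take (t+1)) <;> simp [h]

lemma Qc_mono {t t' : ℕ} (h : t ≤ t') : Qc B q act t ≤ Qc B q act t' := by
  induction t' with
  | zero => have : t = 0 := by omega
            subst this; exact le_refl _
  | succ t' ih =>
    rcases Nat.lt_or_ge t (t' + 1) with h1 | h1
    · refine le_trans (ih (by omega)) ?_
      rw [Qc_succ]; omega
    · have : t = t' + 1 := by omega
      subst this; exact le_refl _

lemma Qc_le
    (hq : (Finset.univ.filter fun t : Fin n => q (reqsUpTo (rfin B q act) t.val) = true).card ≤ B) :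
    Qc B q act n ≤ B := by
  have h1 : (Finset.univ.filter fun t : Fin n => q (reqsUpTo (rfin B q act) t.val) = true).card
      = ∑ t : Fin n, if q ((RQ B q act).take (t.val + 1)) = true then 1 else 0 := by
    rw [Finset.card_filter]
    apply Finset.sum_congr rfl
    intro t _
    rw [reqsUpTo_eq]
  have h2 : (∑ t : Fin n, if q ((RQ B q act).take (t.val + 1)) = true then 1 else 0)
      = ∑ i ∈ Finset.range n, if q ((RQ B q act).take (i + 1)) = true then 1 else 0 :=
    Fin.sum_univ_eq_sum_range (fun i => if q ((RQ B q act).take (i + 1)) = true then 1 else 0) n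
  rw [Qc, lenfilter]
  omega

/-! ### Main invariant -/

lemma pend_zero (hinj : Function.Injective fun t : Fin n => aN B q act t.val)
    {t : ℕ} (ht : t < n)
    (hsub : Aset q act (sim B q act t).2 (sim B q act t).1 \ pv (sim B q act t).2 = ∅) :
    (sim B q act t).2.count none = 0 := by
  have hsub' := Finset.sdiff_eq_empty_iff_subset.mp hsub
  have hA : (Aset q act (sim B q act t).2 (sim B q act t).1).card = t := by
    rw [Aset_eq B q act (by omega : t ≤ n)]
    rw [Finset.card_image_of_injOn, Finset.card_range]
    intro a ha b hb hab
    rw [Finset.coe_range, Set.mem_Iio] at ha hb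
    have hfe : (⟨a, by omega⟩ : Fin n) = ⟨b, by omega⟩ := hinj hab
    simpa using hfe
  have h2 := List.toFinset_card_of_nodup (sim_nodup B q act t)
  have h3 := length_filterMap_id (sim B q act t).2
  have h4 := (sim_len B q act t).2
  have hle := Finset.card_le_card hsub'
  rw [pv] at hle
  omega

lemma main_inv (hinj : Function.Injective fun t : Fin n => aN B q act t.val) :
    ∀ t, t ≤ n →
      (sim B q act t).1.count none
        ≤ Qc B q act t + (if (sim B q act t).2.count none = 0 then 0 else 1) := by
  intro t
  induction t with
  | zero => intro _; simp [sim, Qc]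
  | succ t ih =>
    intro ht
    have iht := ih (by omega)
    obtain ⟨x, h1, h2, hx⟩ := step_spec B q act (sim B q act t)
    have h1' : (sim B q act (t+1)).1 = (sim B q act t).1 ++ [x] := h1
    have h2' : (sim B q act (t+1)).2 = if q ((sim B q act t).1 ++ [x]) = true
        then fillAux ((sim B q act t).2 ++ [x]) (pv ((sim B q act t).2 ++ [x]))
        else (sim B q act t).2 ++ [x] := h2
    have hrc : (sim B q act (t+1)).1.count none
        = (sim B q act t).1.count none + (if x = none then 1 else 0) := by
      rw [h1', List.count_append]; cases x <;> simp
    have hQtake : (RQ B q act).take (t+1) = (sim B q act t).1 ++ [x] := by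
      show List.take (t+1) (sim B q act n).1 = _
      rw [sim_take B q act (by omega : t+1 ≤ n)]; exact h1'
    have hxnone : x = none → (sim B q act t).2.count none = 0 := by
      intro hxe
      rcases hx with ⟨h, he⟩ | ⟨hsub, _, _⟩ | ⟨hsub, _, _⟩
      · rw [hxe] at he; exact absurd he.symm (by simp)
      · exact pend_zero B q act hinj (by omega) hsub
      · exact pend_zero B q act hinj (by omega) hsub
    by_cases hqb : q ((sim B q act t).1 ++ [x]) = true
    · have hp0 : (sim B q act (t+1)).2.count none = 0 := by
        rw [h2', if_pos hqb, List.count_eq_zero]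
        apply fillAux_complete
        have hpc := pv_card_le ((sim B q act t).2 ++ [x])
        have hlf := length_filterMap_id ((sim B q act t).2 ++ [x])
        have hl4 := (sim_len B q act t).2
        have : ((sim B q act t).2 ++ [x]).length = t + 1 := by simp [hl4]
        omega
      have hQs1 : Qc B q act (t+1) = Qc B q act t + 1 := by
        rw [Qc_succ, hQtake]; simp [hqb]
      have hind : (if (sim B q act t).2.count none = 0 then (0:ℕ) else 1) ≤ 1 := by
        split <;> omega
      rw [hp0, hrc, hQs1]
      have h00 : (if (0:ℕ) = 0 then (0:ℕ) else 1) = 0 := by simp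
      rw [h00]
      cases x with
      | none =>
        have hz := hxnone rfl
        rw [hz, h00] at iht
        have hx1 : (if (none : Option (Fin n)) = none then (1:ℕ) else 0) = 1 := by simp
        rw [hx1]
        omega
      | some v =>
        have hx0 : (if (some v : Option (Fin n)) = none then (1:ℕ) else 0) = 0 := by simp
        rw [hx0]
        omega
    · have hps : (sim B q act (t+1)).2 = (sim B q act t).2 ++ [x] := by
        rw [h2', if_neg hqb]
      have hQe : Qc B q act (t+1) = Qc B q act t := by
        rw [Qc_succ, hQtake]; simp [hqb]
      have hpc : (sim B q act (t+1)).2.count none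
          = (sim B q act t).2.count none + (if x = none then 1 else 0) := by
        rw [hps, List.count_append]; cases x <;> simp
      rw [hrc, hQe, hpc]
      cases x with
      | none =>
        have hz := hxnone rfl
        have h00 : (if (0:ℕ) = 0 then (0:ℕ) else 1) = 0 := by simp
        rw [hz, h00] at iht
        rw [hz]
        have hx1 : (if (none : Option (Fin n)) = none then (1:ℕ) else 0) = 1 := by simp
        rw [hx1]
        have h01 : (if (0:ℕ) + 1 = 0 then (0:ℕ) else 1) = 1 := by simp
        rw [h01]
        omega
      | some v =>
        have hx0 : (if (some v : Option (Fin n)) = none then (1:ℕ) else 0) = 0 := by simp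
        rw [hx0]
        simpa using iht

lemma leaf_round
    (hinjQ : Qc B q act n ≤ B)
    (hinj : Function.Injective fun t : Fin n => aN B q act t.val)
    {t : ℕ} (ht : t < n) {s : Fin n}
    (hs : (RQ B q act).getD t none = some s) :
    ∃ t' < t, aN B q act t' = s := by
  obtain ⟨x, h1, h2, hx⟩ := step_spec B q act (sim B q act t)
  have h1' : (sim B q act (t+1)).1 = (sim B q act t).1 ++ [x] := h1
  have hlen1 : ((sim B q act t).1).length = t := (sim_len B q act t).1
  have hxval : x = some s := by
    have htake : (RQ B q act).take (t+1) = (sim B q act t).1 ++ [x] := by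
      show List.take (t+1) (sim B q act n).1 = _
      rw [sim_take B q act (by omega : t+1 ≤ n)]; exact h1'
    have h2l : t < (RQ B q act).length := by rw [RQ_len]; omega
    have h3l : t < ((RQ B q act).take (t+1)).length := by
      rw [List.length_take, RQ_len]; omega
    have hRQt : (RQ B q act).getD t none = ((sim B q act t).1 ++ [x]).getD t none := by
      rw [← htake, List.getD_eq_getElem _ _ h2l, List.getD_eq_getElem _ _ h3l]
      exact List.getElem_take.symm
    rw [hRQt, List.getD_append_right _ _ _ _ (by omega), hlen1] at hs
    simpa using hs
  rcases hx with ⟨h, he⟩ | ⟨_, _, he⟩ | ⟨hsub, hcnt, _⟩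
  · rw [hxval] at he
    have hmin : s = (Aset q act (sim B q act t).2 (sim B q act t).1 \ pv (sim B q act t).2).min' h :=
      Option.some_inj.mp he
    have hmem := Finset.min'_mem _ h
    rw [← hmin] at hmem
    have hmem' := (Finset.mem_sdiff.mp hmem).1
    rw [Aset_eq B q act (by omega : t ≤ n), Finset.mem_image] at hmem'
    obtain ⟨t', ht', he'⟩ := hmem'
    rw [Finset.mem_range] at ht'
    exact ⟨t', ht', he'⟩
  · rw [hxval] at he; exact absurd he (by simp)
  · exfalso
    have hp0 := pend_zero B q act hinj (by omega) hsub
    have hmi := main_inv B q act hinj t (by omega)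
    rw [hp0] at hmi
    simp at hmi
    have hQm : Qc B q act t ≤ Qc B q act n := Qc_mono B q act (by omega)
    omega


/-! ### Cost accounting -/

lemma starDist_none' (v : Fin n) : starDist none (some v) = 1 := by simp [starDist]

lemma starDist_same (v : Fin n) : starDist (some v) (some v) = 0 := by simp [starDist]

lemma starDist_ne {u v : Fin n} (h : u ≠ v) : starDist (some u) (some v) = 2 := by
  simp [starDist, h]

lemma starDist_nonneg (x y : Option (Fin n)) : 0 ≤ starDist x y := by
  unfold starDist; split_ifs <;> norm_num

lemma pe_req {t : Fin n} {s : Fin n} (h : rfin B q act t = some s) :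
    pe B q act t = s := by
  have hPV : (PV B q act).getD t.val none = some s := sim_reqpiv B q act h
  have hF := pivF_ext B q act hPV
  rw [pe_apply]
  show ((pivF B q act).getD t.val none).getD t = s
  rw [hF, Option.getD_some]

lemma sum_ind_eq :
    ∑ t : Fin n, (if rfin B q act t = none then (1:ℝ) else 0)
      = ((RQ B q act).count none : ℝ) := by
  have h1 := count_getD (RQ B q act)
  rw [RQ_len] at h1
  have h2 : ∑ t : Fin n, (if rfin B q act t = none then (1:ℝ) else 0)
      = ∑ i ∈ Finset.range n, (if (RQ B q act).getD i none = none then (1:ℝ) else 0) :=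
    Fin.sum_univ_eq_sum_range (fun i => if (RQ B q act).getD i none = none then (1:ℝ) else 0) n
  rw [h2, h1]
  push_cast
  apply Finset.sum_congr rfl
  intro i _
  split <;> simp

lemma cost_pe :
    ∑ t : Fin n, starDist (rfin B q act t) (some (pe B q act t))
      = ((RQ B q act).count none : ℝ) := by
  rw [← sum_ind_eq]
  apply Finset.sum_congr rfl
  intro t _
  rcases h : rfin B q act t with _ | s
  · rw [starDist_none']; simp
  · rw [pe_req B q act h, starDist_same]; simp

lemma cnt_le : (RQ B q act).count none ≤ B + 1 := sim_count B q act (le_refl n)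

lemma cost_lb_any (π' : Fin n ≃ Fin n) :
    ((RQ B q act).count none : ℝ) ≤ ∑ t : Fin n, starDist (rfin B q act t) (some (π' t)) := by
  rw [← sum_ind_eq]
  apply Finset.sum_le_sum
  intro t _
  rcases h : rfin B q act t with _ | s
  · rw [starDist_none']; simp
  · have h0 : (if (some s : Option (Fin n)) = none then (1:ℝ) else 0) = 0 := by simp
    rw [h0]
    exact starDist_nonneg _ _

lemma cost_alg
    (hq : (Finset.univ.filter fun t : Fin n => q (reqsUpTo (rfin B q act) t.val) = true).card ≤ B)
    (hinj : Function.Injective fun t : Fin n => aN B q act t.val) :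
    2 * (n:ℝ) - B - 1
      ≤ ∑ t : Fin n, starDist (rfin B q act t) (some (aN B q act t.val)) := by
  have hQB := Qc_le B q act hq
  have hcnt := cnt_le B q act
  have hterm : ∀ t : Fin n,
      (if rfin B q act t = none then (1:ℝ) else 2)
        ≤ starDist (rfin B q act t) (some (aN B q act t.val)) := by
    intro t
    rcases h : rfin B q act t with _ | s
    · rw [starDist_none']; simp
    · obtain ⟨t', ht', he⟩ := leaf_round B q act hQB hinj t.isLt h
      have hne : s ≠ aN B q act t.val := by
        intro hcon
        have hv : (⟨t', by omega⟩ : Fin n) = t := by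
          apply hinj
          show aN B q act t' = aN B q act t.val
          rw [he, hcon]
        have := congrArg Fin.val hv
        simp at this
        omega
      rw [starDist_ne hne]
      simp
  have hsum : ∑ t : Fin n, (if rfin B q act t = none then (1:ℝ) else 2)
      = 2 * (n:ℝ) - ((RQ B q act).count none : ℝ) := by
    have hpt : ∀ t : Fin n, (if rfin B q act t = none then (1:ℝ) else 2)
        = 2 - (if rfin B q act t = none then (1:ℝ) else 0) := by
      intro t; split <;> ring
    rw [Finset.sum_congr rfl (fun t _ => hpt t), Finset.sum_sub_distrib, sum_ind_eq]
    congr 1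
    rw [Finset.sum_const, Finset.card_univ, Fintype.card_fin, nsmul_eq_mul, mul_comm]
  refine le_trans ?_ (Finset.sum_le_sum fun t _ => hterm t)
  rw [hsum]
  have hc : ((RQ B q act).count none : ℝ) ≤ (B:ℝ) + 1 := by exact_mod_cast hcnt
  linarith

end S8

/-- For every deterministic online matching algorithm on the star metric that may
query a prediction oracle at most `B` times (query rule `q`, action rule `act`),
there is a request sequence `r` and an optimal offline matching `π` of cost at
most `B + 1` such that, with the accurate predictions derived from `π`, the
algorithm (if it makes at most `B` queries and never reuses a server) incurs
cost at least `2n − B − 1`. -/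
theorem stmt8 (n B : ℕ) (hB : B + 1 ≤ n)
    (q : List (Option (Fin n)) → Bool)
    (act : List (Option (Fin n)) → List (Finset (Fin n)) → Fin n) :
    ∃ (r : Fin n → Option (Fin n)) (π : Fin n ≃ Fin n),
      (∑ t : Fin n, starDist (r t) (some (π t)) ≤ (B : ℝ) + 1) ∧
      (∀ π' : Fin n ≃ Fin n,
        ∑ t : Fin n, starDist (r t) (some (π t)) ≤
          ∑ t : Fin n, starDist (r t) (some (π' t))) ∧
      (((Finset.univ.filter fun t : Fin n => q (reqsUpTo r t.val) = true).card ≤ B) →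
        (Function.Injective fun t : Fin n =>
          act (reqsUpTo r t.val) (predsUpTo q r (accPred π) t.val)) →
        (2 * (n : ℝ) - B - 1) ≤
          ∑ t : Fin n, starDist (r t)
            (some (act (reqsUpTo r t.val) (predsUpTo q r (accPred π) t.val)))) := by
  classical
  refine ⟨S8.rfin B q act, S8.pe B q act, ?_, ?_, ?_⟩
  · rw [S8.cost_pe]
    have := S8.cnt_le B q act
    exact_mod_cast this
  · intro π'
    rw [S8.cost_pe]
    exact S8.cost_lb_any B q act π'
  · intro h1 h2
    have hfe : ∀ t : Fin n,
        act (reqsUpTo (S8.rfin B q act) t.val)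
          (predsUpTo q (S8.rfin B q act) (accPred (S8.pe B q act)) t.val)
          = S8.aN B q act t.val := S8.act_eq B q act
    have h2' : Function.Injective fun t : Fin n => S8.aN B q act t.val := by
      have hfeq : (fun t : Fin n =>
          act (reqsUpTo (S8.rfin B q act) t.val)
            (predsUpTo q (S8.rfin B q act) (accPred (S8.pe B q act)) t.val))
          = fun t : Fin n => S8.aN B q act t.val := funext hfe
      rw [hfeq] at h2
      exact h2
    have hs : ∑ t : Fin n, starDist (S8.rfin B q act t)
        (some (act (reqsUpTo (S8.rfin B q act) t.val)
          (predsUpTo q (S8.rfin B q act) (accPred (S8.pe B q act)) t.val)))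
        = ∑ t : Fin n, starDist (S8.rfin B q act t) (some (S8.aN B q act t.val)) := by
      apply Finset.sum_congr rfl
      intro t _
      rw [hfe t]
    rw [hs]
    exact S8.cost_alg B q act h1 h2'
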